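/- Let x, y ∈ ℂⁿ be unit vectors. For every complex skew-symmetric matrix R (Rᵀ = −R) with spectral norm ‖R‖ ≤ 1, one has |y*Rx| ≤ √(1 − |xᵀy|²). -/

import Mathlib

open Matrix

/-- The spectral (operator 2-) norm of a complex matrix. -/
noncomputable def specNorm {n : ℕ} (A : Matrix (Fin n) (Fin n) ℂ) : ℝ :=
  ‖Matrix.toEuclideanCLM (𝕜 := ℂ) A‖

theorem skew_symmetric_upper_bound {n : ℕ} (x y : EuclideanSpace ℂ (Fin n))
    (hx : ‖x‖ = 1) (hy : ‖y‖ = 1) (R : Matrix (Fin n) (Fin n) ℂ)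
    (hR : Rᵀ = -R) (hnorm : specNorm R ≤ 1) :
    ‖star (y : Fin n → ℂ) ⬝ᵥ R.mulVec (x : Fin n → ℂ)‖ ≤
      Real.sqrt (1 - ‖(x : Fin n → ℂ) ⬝ᵥ (y : Fin n → ℂ)‖ ^ 2) := by
  set X : Fin n → ℂ := (x : Fin n → ℂ) with hX
  set Y : Fin n → ℂ := (y : Fin n → ℂ) with hY
  set s : ℂ := X ⬝ᵥ Y with hs
  set α : ℂ := star s with hα
  -- x^T R x = 0
  have h0 : X ⬝ᵥ R.mulVec X = 0 := by
    have h1 : X ⬝ᵥ R.mulVec X = (R.vecMul X) ⬝ᵥ X := Matrix.dotProduct_mulVec X R X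
    have h2 : R.vecMul X = -(R.mulVec X) := by
      rw [← Matrix.mulVec_transpose, hR, Matrix.neg_mulVec]
    rw [h2, neg_dotProduct, dotProduct_comm (R.mulVec X) X] at h1
    linear_combination h1 / 2
  set ystar : EuclideanSpace ℂ (Fin n) := (WithLp.equiv 2 _).symm (star Y) with hystar
  set w : EuclideanSpace ℂ (Fin n) := ystar - α • x with hw
  set v : EuclideanSpace ℂ (Fin n) := toEuclideanCLM (𝕜 := ℂ) R x with hv
  have hvf : (v : Fin n → ℂ) = R.mulVec X := rfl
  have hxys : (inner ℂ x ystar : ℂ) = α := by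
    simp only [PiLp.inner_apply, hystar, WithLp.equiv_symm_apply, PiLp.toLp_apply, Pi.star_apply, hα, hs,
      dotProduct, star_sum, star_mul', RCLike.star_def, RCLike.inner_apply]
    exact Finset.sum_congr rfl fun _ _ => mul_comm _ _
  have hysx : (inner ℂ ystar x : ℂ) = star α := by
    rw [← inner_conj_symm, hxys, RCLike.star_def]
  have hnys : ‖ystar‖ = 1 := by
    rw [EuclideanSpace.norm_eq] at hy ⊢
    simpa [hystar] using hy
  have habsα : ‖α‖ = ‖s‖ := by simp [hα]
  have hw2 : ‖w‖ ^ 2 = 1 - ‖s‖ ^ 2 := by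
    rw [hw, norm_sub_sq (𝕜 := ℂ), inner_smul_right, hysx, norm_smul, hnys, hx]
    have hre : RCLike.re (α * star α) = ‖s‖ ^ 2 := by
      rw [hα, star_star, RCLike.star_def, ← Complex.normSq_eq_conj_mul_self]
      simp [Complex.sq_norm]
    rw [hre]
    simp only [habsα, mul_one]
    ring
  -- rewrite the dot product
  set wf : Fin n → ℂ := star Y - α • X with hwf
  have hwsub : w = (WithLp.equiv 2 _).symm wf := by
    ext i
    simp [hw, hwf, hystar, hX, PiLp.sub_apply, PiLp.smul_apply, WithLp.equiv_symm_apply, PiLp.toLp_apply]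
  have hsplit : star Y ⬝ᵥ R.mulVec X = wf ⬝ᵥ R.mulVec X := by
    have h3 : (star Y - wf) ⬝ᵥ R.mulVec X = 0 := by
      rw [hwf, sub_sub_cancel, smul_dotProduct, h0, smul_zero]
    rw [sub_dotProduct] at h3
    linear_combination h3
  -- Cauchy-Schwarz
  set w' : EuclideanSpace ℂ (Fin n) := (WithLp.equiv 2 _).symm (star wf) with hw'
  have hinner : (inner ℂ w' v : ℂ) = wf ⬝ᵥ R.mulVec X := by
    rw [← hvf]
    simp only [PiLp.inner_apply, hw', WithLp.equiv_symm_apply, PiLp.toLp_apply, Pi.star_apply,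
      RCLike.inner_apply, dotProduct, RCLike.star_def, Complex.conj_conj]
    exact Finset.sum_congr rfl fun _ _ => mul_comm _ _
  have hnw' : ‖w'‖ = ‖w‖ := by
    rw [EuclideanSpace.norm_eq, EuclideanSpace.norm_eq]
    simp [hw', hwsub]
  have hcs : ‖wf ⬝ᵥ R.mulVec X‖ ≤ ‖w‖ * ‖v‖ := by
    rw [← hinner, ← hnw']
    exact norm_inner_le_norm w' v
  have hvn : ‖v‖ ≤ 1 := by
    calc ‖v‖ ≤ ‖toEuclideanCLM (𝕜 := ℂ) R‖ * ‖x‖ := (toEuclideanCLM (𝕜 := ℂ) R).le_opNorm x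
    _ = specNorm R := by rw [hx, mul_one]; rfl
    _ ≤ 1 := hnorm
  have hwn : ‖w‖ = Real.sqrt (1 - ‖s‖ ^ 2) := by
    rw [← hw2, Real.sqrt_sq (norm_nonneg w)]
  calc ‖star Y ⬝ᵥ R.mulVec X‖ ≤ ‖w‖ * ‖v‖ := by rw [hsplit]; exact hcs
  _ ≤ ‖w‖ * 1 := by
      have := norm_nonneg w
      nlinarith
  _ = Real.sqrt (1 - ‖s‖ ^ 2) := by rw [mul_one, hwn]
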